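/- If D_t > 0 (i.e., 0 ≤ S < 1), then D_i < D_t: equivalently, s1i − s1t > 0 where s1t = S/2 and s1i = (S(1−p) + (2−S)p) / ((S(1−p) + (2−S)p) + (Sq + (2−S)(1−q))), for 0 < p ≤ 1 and 0 < q ≤ 1. -/
import Mathlib


theorem stmt_7 (p q S : ℝ) (hp0 : 0 < p) (hp1 : p ≤ 1) (hq0 : 0 < q) (hq1 : q ≤ 1)
    (hS0 : 0 ≤ S) (hS1 : S < 1) :
    (S * (1 - p) + (2 - S) * p) /
        ((S * (1 - p) + (2 - S) * p) + (S * q + (2 - S) * (1 - q))) - S / 2 > 0 := by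
  have hN : 0 < S * (1 - p) + (2 - S) * p := by nlinarith
  have hM : 0 ≤ S * q + (2 - S) * (1 - q) := by nlinarith
  have hD : 0 < (S * (1 - p) + (2 - S) * p) + (S * q + (2 - S) * (1 - q)) := by linarith
  rw [gt_iff_lt, sub_pos, div_lt_div_iff₀ two_pos hD]
  have key : 0 < (1 - S) * (p * (2 - S) + S * q) := by
    apply mul_pos (by linarith)
    nlinarith
  nlinarith [key]
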